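/- Let m ≥ 2 and let f₀,...,f_{m-1}: ℂ → ℂ be differentiable functions satisfying f_l' = f_{l+1} for 0 ≤ l ≤ m-2 and f_{m-1}' = λ f₀ for some nonzero λ ∈ ℂ. Let M(x) be the m×m matrix with entries M_{pq}(x) = f_{p+q}(x) for p+q ≤ m-1 and M_{pq}(x) = λ f_{p+q-m}(x) for p+q ≥ m (0 ≤ p,q ≤ m-1). Then det M(x) is constant in x. -/

import Mathlib

open Matrix Finset in
/-- Jacobi-style column expansion for the derivative of a determinant. -/
lemma hasDerivAt_det_aux {m : ℕ} (M N : ℂ → Matrix (Fin m) (Fin m) ℂ) (x : ℂ)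
    (h : ∀ p q, HasDerivAt (fun t => M t p q) (N x p q) x) :
    HasDerivAt (fun t => (M t).det)
      (∑ q, ((M x).updateCol q (fun p => N x p q)).det) x := by
  have key : ∀ σ : Equiv.Perm (Fin m),
      HasDerivAt (fun t => ((Equiv.Perm.sign σ : ℤ) : ℂ) * ∏ i, M t (σ i) i)
        (((Equiv.Perm.sign σ : ℤ) : ℂ) *
          ∑ q, (∏ j ∈ Finset.univ.erase q, M x (σ j) j) • N x (σ q) q) x :=
    fun σ => (HasDerivAt.fun_finsetProd (fun i _ => h (σ i) i)).const_mul _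
  have hd := HasDerivAt.fun_sum (u := Finset.univ) (fun σ _ => key σ)
  have hfun : (fun t => (M t).det) =
      fun t => ∑ σ : Equiv.Perm (Fin m), ((Equiv.Perm.sign σ : ℤ) : ℂ) * ∏ i, M t (σ i) i :=
    funext fun t => Matrix.det_apply' (M t)
  rw [hfun]
  refine HasDerivAt.congr_deriv hd (Eq.symm ?_)
  simp only [Matrix.det_apply']
  rw [Finset.sum_comm]
  refine Finset.sum_congr rfl fun σ _ => ?_
  rw [Finset.mul_sum]
  refine Finset.sum_congr rfl fun q _ => ?_
  have hval : (∏ i, (M x).updateCol q (fun p => N x p q) (σ i) i)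
      = N x (σ q) q * ∏ j ∈ Finset.univ.erase q, M x (σ j) j := by
    rw [← Finset.mul_prod_erase Finset.univ _ (Finset.mem_univ q)]
    congr 1
    · simp [Matrix.updateCol_apply]
    · exact Finset.prod_congr rfl fun j hj => by
        simp [Matrix.updateCol_apply, (Finset.mem_erase.mp hj).1]
  rw [hval, smul_eq_mul]
  ring

theorem twisted_hankel_det_const (m : ℕ) (hm : 2 ≤ m)
    (f : ℕ → ℂ → ℂ) (lam : ℂ) (hlam : lam ≠ 0)
    (hderiv : ∀ l, l ≤ m - 2 → ∀ x : ℂ, HasDerivAt (f l) (f (l + 1) x) x)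
    (hlast : ∀ x : ℂ, HasDerivAt (f (m - 1)) (lam * f 0 x) x)
    (M : ℂ → Matrix (Fin m) (Fin m) ℂ)
    (hM : ∀ x (p q : Fin m), M x p q =
      if (p : ℕ) + (q : ℕ) ≤ m - 1 then f ((p : ℕ) + (q : ℕ)) x
      else lam * f ((p : ℕ) + (q : ℕ) - m) x) :
    ∀ x y : ℂ, (M x).det = (M y).det := by
  have h0 : (0 : ℕ) < m := by omega
  set N : ℂ → Matrix (Fin m) (Fin m) ℂ := fun x p q =>
    if h : (q : ℕ) + 1 < m then M x p ⟨(q : ℕ) + 1, h⟩ else lam * M x p ⟨0, h0⟩ with hN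
  have hent : ∀ x (p q : Fin m), HasDerivAt (fun t => M t p q) (N x p q) x := by
    intro x p q
    have hp := p.isLt
    have hq := q.isLt
    have hfun : (fun t => M t p q) = fun t =>
        if (p : ℕ) + (q : ℕ) ≤ m - 1 then f ((p : ℕ) + (q : ℕ)) t
        else lam * f ((p : ℕ) + (q : ℕ) - m) t := funext fun t => hM t p q
    rw [hfun]
    by_cases h1 : (p : ℕ) + (q : ℕ) ≤ m - 1
    · simp only [if_pos h1]
      by_cases h2 : (p : ℕ) + (q : ℕ) ≤ m - 2
      · -- strictly interior: derivative is f (p+q+1)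
        have hq1 : (q : ℕ) + 1 < m := by omega
        have hval : N x p q = f ((p : ℕ) + (q : ℕ) + 1) x := by
          rw [hN]; simp only [dif_pos hq1]
          rw [hM]
          simp only [if_pos (show (p : ℕ) + ((q : ℕ) + 1) ≤ m - 1 by omega)]
          congr 1 <;> omega
        rw [hval]
        exact hderiv _ h2 x
      · -- p + q = m - 1
        have hpq : (p : ℕ) + (q : ℕ) = m - 1 := by omega
        have hval : N x p q = lam * f 0 x := by
          rw [hN]
          by_cases hq1 : (q : ℕ) + 1 < m
          · simp only [dif_pos hq1]
            rw [hM]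
            simp only [if_neg (show ¬ (p : ℕ) + ((q : ℕ) + 1) ≤ m - 1 by omega)]
            congr 2 <;> omega
          · simp only [dif_neg hq1]
            rw [hM]
            simp only [if_pos (show (p : ℕ) + ((0 : ℕ)) ≤ m - 1 by omega)]
            congr 2 <;> omega
        rw [hval, hpq]
        exact hlast x
    · -- p + q ≥ m
      simp only [if_neg h1]
      have hk : (p : ℕ) + (q : ℕ) - m ≤ m - 2 := by omega
      have hval : N x p q = lam * f ((p : ℕ) + (q : ℕ) - m + 1) x := by
        rw [hN]
        by_cases hq1 : (q : ℕ) + 1 < m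
        · simp only [dif_pos hq1]
          rw [hM]
          simp only [if_neg (show ¬ (p : ℕ) + ((q : ℕ) + 1) ≤ m - 1 by omega)]
          congr 2 <;> omega
        · simp only [dif_neg hq1]
          rw [hM]
          simp only [if_pos (show (p : ℕ) + ((0 : ℕ)) ≤ m - 1 by omega)]
          congr 2 <;> omega
      rw [hval]
      exact (hderiv _ hk x).const_mul lam
  have hzero : ∀ x : ℂ, HasDerivAt (fun t => (M t).det) 0 x := by
    intro x
    have hd := hasDerivAt_det_aux M N x (hent x)
    have hsum : (∑ q, ((M x).updateCol q (fun p => N x p q)).det) = 0 := by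
      apply Finset.sum_eq_zero
      intro q _
      by_cases hq1 : (q : ℕ) + 1 < m
      · have hcol : (fun p => N x p q) = fun p => M x p ⟨(q : ℕ) + 1, hq1⟩ := by
          funext p; rw [hN]; simp only [dif_pos hq1]
        rw [hcol]
        exact Matrix.det_updateCol_eq_zero
          (show (⟨(q : ℕ) + 1, hq1⟩ : Fin m) ≠ q from fun h => by
            have := congrArg Fin.val h; simp at this)
      · have hcol : (fun p => N x p q) = lam • fun p => M x p ⟨0, h0⟩ := by
          funext p; rw [hN]; simp only [dif_neg hq1]
          simp [smul_eq_mul]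
        rw [hcol, Matrix.det_updateCol_smul]
        rw [Matrix.det_updateCol_eq_zero
          (show (⟨0, h0⟩ : Fin m) ≠ q from fun h => by
            have := congrArg Fin.val h; simp at this
            have hq := q.isLt
            omega), mul_zero]
    rw [← hsum]
    exact hd
  intro x y
  exact is_const_of_deriv_eq_zero (fun z => (hzero z).differentiableAt)
    (fun z => (hzero z).deriv) x y
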